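/- arXiv:2310.10890 — 3 statements merged into one kernel-verified Lean document; each statement's English description precedes it below -/
import Mathlib

section
/- Let h be a holomorphic function on the disk {|z| ≤ R} (0 < R < 1) satisfying |h(z)| ≤ K·|1 - z²|²/(1 - |z|²)² for all |z| ≤ R. Then |h'(0)| ≤ K(1 + R⁴)/(R(1 - R²)²). -/
open Complex Metric intervalIntegral

theorem cauchy_deriv_bound (h : ℂ → ℂ) (R K : ℝ) (hR0 : 0 < R) (hR1 : R < 1)
    (hK : 0 ≤ K) (hdiff : DifferentiableOn ℂ h (closedBall (0 : ℂ) R))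
    (hbound : ∀ z ∈ closedBall (0 : ℂ) R,
      ‖h z‖ ≤ K * ‖1 - z ^ 2‖ ^ 2 / (1 - ‖z‖ ^ 2) ^ 2) :
    ‖deriv h 0‖ ≤ K * (1 + R ^ 4) / (R * (1 - R ^ 2) ^ 2) := by
  have hR2 : (0:ℝ) < 1 - R ^ 2 := by nlinarith
  have hπ : (0:ℝ) < Real.pi := Real.pi_pos
  have hd : DiffContOnCl ℂ h (ball (0 : ℂ) R) := by
    refine ⟨hdiff.mono ball_subset_closedBall, ?_⟩
    rw [closure_ball (0 : ℂ) hR0.ne']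
    exact hdiff.continuousOn
  have hderiv : deriv h 0 = (2 * ↑Real.pi * I : ℂ)⁻¹ • ∮ z in C(0, R), (z - 0) ^ (-2 : ℤ) • h z := by
    have hcf := hd.deriv_eq_smul_circleIntegral hR0
    have e : (∮ z in C(0, R), (z - 0) ^ (-2 : ℤ) • h z) = ∮ z in C(0, R), (1 / (z - 0) ^ 2) • h z := by
      congr 1; funext z; simp [zpow_neg]
    rw [e, hcf, smul_smul, inv_mul_cancel₀ (by simp [Real.pi_ne_zero]), one_smul]
  set g : ℝ → ℂ := fun θ =>
    deriv (circleMap 0 R) θ • (circleMap 0 R θ - 0) ^ (-2 : ℤ) • h (circleMap 0 R θ) with hg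
  have hmem : ∀ θ : ℝ, circleMap 0 R θ ∈ closedBall (0 : ℂ) R := fun θ =>
    sphere_subset_closedBall (circleMap_mem_sphere (0:ℂ) hR0.le θ)
  have hnormz : ∀ θ : ℝ, ‖circleMap 0 R θ‖ = R := fun θ => by
    rw [norm_circleMap_zero, abs_of_pos hR0]
  have hsq : ∀ θ : ℝ, ‖1 - (circleMap 0 R θ) ^ 2‖ ^ 2
      = 1 + R ^ 4 - 2 * R ^ 2 * Real.cos (2 * θ) := by
    intro θ
    have hre : (circleMap 0 R θ).re = R * Real.cos θ := by simp [circleMap]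
    have him : (circleMap 0 R θ).im = R * Real.sin θ := by simp [circleMap]
    rw [Complex.sq_norm, Complex.normSq_apply]
    have h2 : Real.cos (2 * θ) = Real.cos θ ^ 2 - Real.sin θ ^ 2 := by
      rw [Real.cos_two_mul]
      nlinarith [Real.sin_sq_add_cos_sq θ]
    simp only [Complex.sub_re, Complex.sub_im, Complex.one_re, Complex.one_im,
      pow_two, Complex.mul_re, Complex.mul_im, hre, him, h2]
    linear_combination (R ^ 4 * (Real.cos θ ^ 2 + Real.sin θ ^ 2 + 1)) * Real.sin_sq_add_cos_sq θ
  set C : ℝ := K / (R * (1 - R ^ 2) ^ 2) with hC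
  have hC0 : 0 ≤ C := div_nonneg hK (by positivity)
  have hgb : ∀ θ : ℝ, ‖g θ‖ ≤ C * (1 + R ^ 4 - 2 * R ^ 2 * Real.cos (2 * θ)) := by
    intro θ
    have hz := hnormz θ
    rw [hg]
    simp only [deriv_circleMap, sub_zero, norm_smul, norm_mul,
      Complex.norm_I, mul_one, norm_zpow, norm_circleMap_zero, abs_of_pos hR0]
    have hb := hbound _ (hmem θ)
    rw [hz, hsq θ] at hb
    have hRz : (R : ℝ) ^ (-2 : ℤ) = (R ^ 2)⁻¹ := by
      rw [zpow_neg, zpow_two, pow_two]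
    rw [hRz]
    have hstep : R * ((R ^ 2)⁻¹ * ‖h (circleMap 0 R θ)‖)
        ≤ R * ((R ^ 2)⁻¹ * (K * (1 + R ^ 4 - 2 * R ^ 2 * Real.cos (2 * θ)) / (1 - R ^ 2) ^ 2)) := by
      gcongr R * ((R ^ 2)⁻¹ * ?_)
    refine hstep.trans (le_of_eq ?_)
    rw [hC]; field_simp
  have hgc : Continuous g := by
    have h1 : Continuous fun θ : ℝ => h (circleMap 0 R θ) :=
      hdiff.continuousOn.comp_continuous (continuous_circleMap 0 R) hmem
    have h2 : Continuous fun θ : ℝ => (circleMap 0 R θ - 0) ^ (-2 : ℤ) := by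
      apply Continuous.zpow₀ (by continuity)
      intro θ
      left
      simpa using circleMap_ne_center (c := (0:ℂ)) hR0.ne' (θ := θ)
    have h3 : Continuous fun θ : ℝ => deriv (circleMap 0 R) θ := by
      simp only [deriv_circleMap]
      exact (continuous_circleMap 0 R).mul continuous_const
    exact h3.smul (h2.smul h1)
  have hcos_int : ∫ θ in (0:ℝ)..(2 * Real.pi), Real.cos (2 * θ) = 0 := by
    have key := intervalIntegral.integral_comp_mul_left (f := Real.cos)
      (a := 0) (b := 2 * Real.pi) (c := 2) two_ne_zero
    rw [key, mul_zero, integral_cos, Real.sin_zero]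
    have h4 : Real.sin (2 * (2 * Real.pi)) = 0 := by
      have : 2 * (2 * Real.pi) = (4 : ℕ) * Real.pi := by push_cast; ring
      rw [this, Real.sin_nat_mul_pi]
    rw [h4]
    simp
  have hcont2 : Continuous fun θ : ℝ => 2 * R ^ 2 * Real.cos (2 * θ) :=
    continuous_const.mul (Real.continuous_cos.comp (continuous_const.mul continuous_id))
  have hint : ∫ θ in (0:ℝ)..(2 * Real.pi), C * (1 + R ^ 4 - 2 * R ^ 2 * Real.cos (2 * θ))
      = C * (2 * Real.pi * (1 + R ^ 4)) := by
    rw [intervalIntegral.integral_const_mul]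
    have hi1 : IntervalIntegrable (fun _ : ℝ => (1 : ℝ) + R ^ 4)
        MeasureTheory.volume 0 (2 * Real.pi) := intervalIntegrable_const
    have hi2 : IntervalIntegrable (fun θ : ℝ => 2 * R ^ 2 * Real.cos (2 * θ))
        MeasureTheory.volume 0 (2 * Real.pi) := hcont2.intervalIntegrable _ _
    rw [intervalIntegral.integral_sub hi1 hi2, intervalIntegral.integral_const,
      intervalIntegral.integral_const_mul, hcos_int]
    try simp only [mul_zero, sub_zero, smul_eq_mul]
    try ring
  rw [hderiv]
  have habs : ‖(2 * ↑Real.pi * I : ℂ)⁻¹‖ = (2 * Real.pi)⁻¹ := by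
    rw [norm_inv]
    simp [abs_of_pos hπ]
  have hcircle : (∮ z in C(0, R), (z - 0) ^ (-2 : ℤ) • h z)
      = ∫ θ in (0:ℝ)..(2 * Real.pi), g θ := rfl
  rw [norm_smul, habs, hcircle]
  have hIb : ‖∫ θ in (0:ℝ)..(2 * Real.pi), g θ‖ ≤ C * (2 * Real.pi * (1 + R ^ 4)) := by
    have s1 : ‖∫ θ in (0:ℝ)..(2 * Real.pi), g θ‖ ≤ ∫ θ in (0:ℝ)..(2 * Real.pi), ‖g θ‖ :=
      intervalIntegral.norm_integral_le_integral_norm (by positivity)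
    have s2 : (∫ θ in (0:ℝ)..(2 * Real.pi), ‖g θ‖)
        ≤ ∫ θ in (0:ℝ)..(2 * Real.pi), C * (1 + R ^ 4 - 2 * R ^ 2 * Real.cos (2 * θ)) := by
      apply intervalIntegral.integral_mono_on (by positivity)
      · exact hgc.norm.intervalIntegrable _ _
      · exact (continuous_const.mul (continuous_const.sub hcont2)).intervalIntegrable _ _
      · intro θ _; exact hgb θ
    exact s1.trans (s2.trans_eq hint)
  have final : (2 * Real.pi)⁻¹ * ‖∫ θ in (0:ℝ)..(2 * Real.pi), g θ‖
      ≤ (2 * Real.pi)⁻¹ * (C * (2 * Real.pi * (1 + R ^ 4))) := by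
    gcongr
  refine final.trans (le_of_eq ?_)
  rw [hC]
  try field_simp
  try ring
end

section
/- If h is holomorphic on the disk {|z| ≤ R} with R = tanh(r/2), 0 < r ≤ 1/2, and |h(z)| ≤ K·|1-z²|²/(1-|z|²)² on this disk, then |h'(0)| ≤ 5K/(2r). -/
open Complex Metric

lemma exp_quarter_lt : Real.exp (1/4) < 1.285 := by
  have h4 : Real.exp (1/4) ^ 4 = Real.exp 1 := by
    rw [← Real.exp_nat_mul]; norm_num
  have he : Real.exp 1 < 2.7182818286 := Real.exp_one_lt_d9
  nlinarith [Real.exp_pos (1/4), sq_nonneg (Real.exp (1/4) - 1.285),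
    sq_nonneg (Real.exp (1/4) + 1.285), sq_nonneg (Real.exp (1/4)^2 - 1.285^2)]

lemma cosh_quarter_le (x : ℝ) (hx0 : 0 ≤ x) (hx : x ≤ 1/4) : Real.cosh x ≤ 16/15 := by
  have hu1 : 1 ≤ Real.exp x := Real.one_le_exp hx0
  have hu2 : Real.exp x < 1.285 := lt_of_le_of_lt (Real.exp_le_exp.2 hx) exp_quarter_lt
  have hpos : (0:ℝ) < Real.exp x := Real.exp_pos x
  rw [Real.cosh_eq, Real.exp_neg]
  have key : 15 * Real.exp x ^ 2 - 32 * Real.exp x + 15 ≤ 0 := by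
    nlinarith [(Real.exp x - 1) * (1.285 - Real.exp x)]
  have h2 : Real.exp x + (Real.exp x)⁻¹ ≤ 32/15 := by
    rw [← sub_nonneg]
    have expand : 32/15 - (Real.exp x + (Real.exp x)⁻¹)
        = (32 * Real.exp x - 15 * Real.exp x ^ 2 - 15) / (15 * Real.exp x) := by
      field_simp; ring
    rw [expand]
    apply div_nonneg (by linarith) (by positivity)
  linarith

lemma tanh_bounds (x : ℝ) (hx0 : 0 < x) (hx : x ≤ 1/4) :
    15 * x / 16 ≤ Real.tanh x ∧ Real.tanh x ≤ 1/4 := by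
  have hc := Real.cosh_pos x
  have hcle := cosh_quarter_le x hx0.le hx
  have hs : x ≤ Real.sinh x := (Real.self_lt_sinh_iff.2 hx0).le
  rw [Real.tanh_eq_sinh_div_cosh]
  constructor
  · rw [le_div_iff₀ hc]
    nlinarith
  · rw [div_le_iff₀ hc]
    have hu1 : 1 ≤ Real.exp x := Real.one_le_exp hx0.le
    have hu2 : Real.exp x < 1.285 := lt_of_le_of_lt (Real.exp_le_exp.2 hx) exp_quarter_lt
    have hpos : (0:ℝ) < Real.exp x := Real.exp_pos x
    rw [Real.sinh_eq, Real.cosh_eq, Real.exp_neg, ← sub_nonneg]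
    have expand : 1/4 * ((Real.exp x + (Real.exp x)⁻¹)/2) - (Real.exp x - (Real.exp x)⁻¹)/2
        = (5 - 3 * Real.exp x ^ 2) / (8 * Real.exp x) := by
      field_simp; ring
    rw [expand]
    apply div_nonneg (by nlinarith) (by positivity)

theorem cauchy_deriv_bound_tanh (h : ℂ → ℂ) (r K : ℝ) (hr0 : 0 < r) (hr1 : r ≤ 1 / 2)
    (hK : 0 ≤ K)
    (hdiff : DifferentiableOn ℂ h (closedBall (0 : ℂ) (Real.tanh (r / 2))))
    (hbound : ∀ z ∈ closedBall (0 : ℂ) (Real.tanh (r / 2)),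
      ‖h z‖ ≤ K * ‖1 - z ^ 2‖ ^ 2 / (1 - ‖z‖ ^ 2) ^ 2) :
    ‖deriv h 0‖ ≤ 5 * K / (2 * r) := by
  set R := Real.tanh (r / 2) with hRdef
  obtain ⟨hRlow, hRup⟩ := tanh_bounds (r/2) (by linarith) (by linarith)
  have hR0 : 0 < R := lt_of_lt_of_le (by linarith) hRlow
  have hRup' : R ≤ 1/4 := by rw [hRdef]; exact hRup
  have h1r : 15 * r / 32 ≤ R := by
    rw [hRdef]
    calc 15 * r / 32 = 15 * (r/2) / 16 := by ring
    _ ≤ Real.tanh (r/2) := hRlow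
  have hsq : (0:ℝ) < (1 - R ^ 2) ^ 2 := by nlinarith
  -- denominator nonvanishing on closed ball
  have hden : ∀ z ∈ closedBall (0 : ℂ) R, (1 - z ^ 2) ≠ 0 := by
    intro z hz hcon
    rw [mem_closedBall, dist_zero_right] at hz
    have h1 : z ^ 2 = 1 := by linear_combination -hcon
    have h2 : ‖z‖ ^ 2 = 1 := by rw [← norm_pow, h1, norm_one]
    nlinarith [norm_nonneg z]
  set g : ℂ → ℂ := fun z => h z / (1 - z ^ 2) ^ 2 with hgdef
  have hgdiff : DifferentiableOn ℂ g (closedBall (0 : ℂ) R) := by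
    apply hdiff.div
    · exact (((differentiable_const (1:ℂ)).sub (differentiable_pow 2)).pow 2).differentiableOn
    · intro z hz; exact pow_ne_zero 2 (hden z hz)
  have heq : Set.EqOn h (fun z => g z * (1 - z ^ 2) ^ 2) (closedBall (0 : ℂ) R) := by
    intro z hz
    simp only [hgdef]
    field_simp [pow_ne_zero 2 (hden z hz)]
    rw [mul_div_assoc, div_self (hden z hz), mul_one]
  have hderiv_eq : deriv h 0 = deriv g 0 := by
    have h0mem : (0:ℂ) ∈ ball (0:ℂ) R := mem_ball_self hR0
    have hev : h =ᶠ[nhds (0:ℂ)] fun z => g z * (1 - z ^ 2) ^ 2 :=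
      Filter.eventuallyEq_of_mem (isOpen_ball.mem_nhds h0mem)
        (fun z hz => heq (ball_subset_closedBall hz))
    rw [hev.deriv_eq]
    have hg0 : DifferentiableAt ℂ g 0 :=
      (hgdiff.differentiableAt (closedBall_mem_nhds _ hR0))
    have hq : HasDerivAt (fun z : ℂ => (1 - z ^ 2) ^ 2) 0 0 := by
      have h1 : HasDerivAt (fun z : ℂ => 1 - z ^ 2) (-(2 * 0 ^ (2-1))) 0 :=
        ((hasDerivAt_pow 2 (0:ℂ)).const_sub 1)
      have := h1.fun_pow 2
      refine this.congr_deriv ?_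
      norm_num
    have := (hg0.hasDerivAt.fun_mul hq).deriv
    rw [this]
    norm_num
  -- Cauchy estimate for g
  have hcauchy : ‖deriv g 0‖ ≤ (K / (1 - R ^ 2) ^ 2) / R := by
    apply Complex.norm_deriv_le_of_forall_mem_sphere_norm_le hR0
    · rw [← closure_ball (0:ℂ) hR0.ne'] at hgdiff
      exact hgdiff.diffContOnCl
    · intro z hz
      rw [mem_sphere_iff_norm, sub_zero] at hz
      have hzmem : z ∈ closedBall (0:ℂ) R := by
        rw [mem_closedBall, dist_zero_right, hz]
      have hb := hbound z hzmem
      have hnz : (0:ℝ) < ‖1 - z ^ 2‖ := by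
        rw [norm_pos_iff]; exact hden z hzmem
      simp only [hgdef]
      rw [norm_div, norm_pow]
      rw [div_le_div_iff₀ (by positivity) hsq]
      rw [hz] at hb
      calc ‖h z‖ * (1 - R ^ 2) ^ 2
          ≤ (K * ‖1 - z ^ 2‖ ^ 2 / (1 - R ^ 2) ^ 2) * (1 - R ^ 2) ^ 2 := by
            apply mul_le_mul_of_nonneg_right hb hsq.le
        _ = K * ‖1 - z ^ 2‖ ^ 2 := by rw [div_mul_cancel₀ _ hsq.ne']
  rw [hderiv_eq]
  apply le_trans hcauchy
  rw [div_div, div_le_div_iff₀ (by positivity) (by positivity)]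
  have hR2 : R^2 ≤ 1/16 := by nlinarith
  have e2 : (225:ℝ)/256 ≤ (1-R^2)^2 := by nlinarith [sq_nonneg (R^2)]
  have e3 : (225:ℝ)/256 * (15*r/32) ≤ (1-R^2)^2 * R :=
    mul_le_mul e2 h1r (by positivity) (by positivity)
  nlinarith [mul_le_mul_of_nonneg_left e3 hK]
end

section
/- Let z₊, z₋ ∈ ℂ satisfy |z₋| ≤ κ and |z₊| ≥ 1/κ for some 0 < κ < 1/2, and let m(z) = i·((i−z₊)/(i−z₋))·((z−z₋)/(z−z₊)). Then m(z₋)=0, m(z₊)=∞, m(i)=i, and |m'(i) − 1| ≤ 2κ/(1−κ) and |1/m'(i) − 1| ≤ 2κ/(1−κ). -/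
open Complex

set_option maxHeartbeats 1000000 in
theorem mobius_normalization_derivative_bound
    (κ : ℝ) (hκ0 : 0 < κ) (hκ1 : κ < 1 / 2) (zp zm : ℂ)
    (hzm : ‖zm‖ ≤ κ) (hzp : 1 / κ ≤ ‖zp‖)
    (m : ℂ → ℂ)
    (hm : ∀ z : ℂ, m z = Complex.I * ((Complex.I - zp) / (Complex.I - zm)) *
      ((z - zm) / (z - zp))) :
    m zm = 0 ∧ m Complex.I = Complex.I ∧
      Filter.Tendsto (fun z => ‖m z‖) (nhdsWithin zp {zp}ᶜ) Filter.atTop ∧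
      ‖deriv m Complex.I - 1‖ ≤ 2 * κ / (1 - κ) ∧
      ‖(deriv m Complex.I)⁻¹ - 1‖ ≤ 2 * κ / (1 - κ) := by
  have hκ1' : κ < 1 := by linarith
  have h1κ : (0:ℝ) < 1 - κ := by linarith
  have hzp0 : (0:ℝ) < ‖zp‖ := lt_of_lt_of_le (by positivity) hzp
  have hzpne : zp ≠ 0 := by simpa using hzp0.ne'
  have hb : ‖zp⁻¹‖ ≤ κ := by
    rw [norm_inv, inv_le_comm₀ hzp0 hκ0]
    simpa [one_div] using hzp
  have hzm1 : ‖zm‖ < 1 := lt_of_le_of_lt hzm hκ1'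
  have hb1 : ‖zp⁻¹‖ < 1 := lt_of_le_of_lt hb hκ1'
  have hzp1 : (1:ℝ) < ‖zp‖ := by
    calc (1:ℝ) < 1/κ := by rw [lt_div_iff₀ hκ0]; linarith
    _ ≤ ‖zp‖ := hzp
  -- nonvanishing facts
  have hImn : (1:ℝ) - κ ≤ ‖Complex.I - zm‖ := by
    have := norm_sub_norm_le Complex.I zm
    simp only [Complex.norm_I] at this
    linarith
  have hIpn : (0:ℝ) < ‖Complex.I - zp‖ := by
    have := norm_sub_norm_le zp Complex.I
    simp only [Complex.norm_I] at this
    have : ‖zp‖ - 1 ≤ ‖Complex.I - zp‖ := by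
      rwa [norm_sub_rev] at this
    linarith
  have hIp : Complex.I - zp ≠ 0 := norm_pos_iff.mp hIpn
  have hIm : Complex.I - zm ≠ 0 := by
    apply norm_pos_iff.mp; linarith
  have hmp : zm - zp ≠ 0 := by
    intro h
    have h2 : zm = zp := by linear_combination h
    rw [h2] at hzm1; linarith
  have hpm : zp - zm ≠ 0 := fun h => hmp (by linear_combination -h)
  -- part 1
  have p1 : m zm = 0 := by rw [hm]; simp
  -- part 2
  have p2 : m Complex.I = Complex.I := by
    rw [hm]; field_simp
  -- part 3
  have p3 : Filter.Tendsto (fun z => ‖m z‖) (nhdsWithin zp {zp}ᶜ) Filter.atTop := by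
    have key : ∀ z, ‖m z‖ =
        ‖Complex.I * ((Complex.I - zp) / (Complex.I - zm)) * (z - zm)‖ * ‖z - zp‖⁻¹ := by
      intro z
      rw [hm]
      simp [norm_mul, norm_div, div_eq_mul_inv]
      ring
    simp only [key]
    apply Filter.Tendsto.pos_mul_atTop
      (C := ‖Complex.I * ((Complex.I - zp) / (Complex.I - zm)) * (zp - zm)‖)
    · have : Complex.I * ((Complex.I - zp) / (Complex.I - zm)) * (zp - zm) ≠ 0 := by
        apply mul_ne_zero (mul_ne_zero Complex.I_ne_zero (div_ne_zero hIp hIm)) hpm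
      exact norm_pos_iff.mpr this
    · apply Filter.Tendsto.mono_left _ nhdsWithin_le_nhds
      exact (Continuous.norm (by continuity)).tendsto' zp _ rfl
    · exact Filter.Tendsto.inv_tendsto_nhdsGT_zero
        (tendsto_norm_sub_self_nhdsNE zp)
  -- derivative
  have hD : deriv m Complex.I =
      Complex.I * ((Complex.I - zp) / (Complex.I - zm)) *
        ((zm - zp) / (Complex.I - zp)^2) := by
    have h1 : HasDerivAt (fun z : ℂ => (z - zm) / (z - zp))
        ((1 * (Complex.I - zp) - (Complex.I - zm) * 1) / (Complex.I - zp)^2) Complex.I := by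
      exact HasDerivAt.div ((hasDerivAt_id Complex.I).sub_const zm)
        ((hasDerivAt_id Complex.I).sub_const zp) hIp
    have h2 := h1.const_mul (Complex.I * ((Complex.I - zp) / (Complex.I - zm)))
    have hmeq : m = fun z => Complex.I * ((Complex.I - zp) / (Complex.I - zm)) *
        ((z - zm) / (z - zp)) := funext hm
    rw [hmeq]
    rw [h2.deriv]
    ring
  -- explicit derivative value
  have hDval : deriv m Complex.I =
      Complex.I * (zm - zp) / ((Complex.I - zm) * (Complex.I - zp)) := by
    rw [hD]; field_simp
  -- helper bound
  have hfrac : ∀ u v : ℂ, ‖u‖ ≤ κ → (1:ℝ) - κ ≤ ‖v‖ → ‖u / v‖ ≤ κ / (1 - κ) := by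
    intro u v hu hv
    rw [norm_div]
    exact div_le_div₀ (le_of_lt hκ0) hu h1κ hv
  -- part 4
  have p4 : ‖deriv m Complex.I - 1‖ ≤ 2 * κ / (1 - κ) := by
    have hib : (1:ℂ) - Complex.I * zp⁻¹ ≠ 0 := by
      intro h
      have : ‖(1:ℂ) - Complex.I * zp⁻¹‖ = 0 := by rw [h]; simp
      have h3 : (1:ℝ) - ‖zp⁻¹‖ ≤ ‖(1:ℂ) - Complex.I * zp⁻¹‖ := by
        have := norm_sub_norm_le (1:ℂ) (Complex.I * zp⁻¹)
        simpa using this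
      rw [this] at h3; linarith
    have hpI : zp - Complex.I ≠ 0 := fun h => hIp (by linear_combination -h)
    have hsplit : deriv m Complex.I - 1 =
        zm / (Complex.I - zm) + Complex.I / (zp - Complex.I) := by
      rw [hDval]
      field_simp
      ring_nf
    rw [hsplit]
    have b1 : ‖zm / (Complex.I - zm)‖ ≤ κ / (1 - κ) := hfrac _ _ hzm hImn
    have b2 : ‖Complex.I / (zp - Complex.I)‖ ≤ κ / (1 - κ) := by
      rw [norm_div, Complex.norm_I]
      rw [div_le_div_iff₀ (by linarith [norm_pos_iff.mpr hpI]) h1κ]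
      have h4 : (1 - κ) / κ ≤ ‖zp - Complex.I‖ := by
        have := norm_sub_norm_le zp Complex.I
        simp only [Complex.norm_I] at this
        have h5 : (1 - κ) / κ ≤ ‖zp‖ - 1 := by
          rw [div_le_iff₀ hκ0] at hzp ⊢
          ring_nf
          ring_nf at hzp
          nlinarith
        linarith
      rw [div_le_iff₀ hκ0] at h4
      nlinarith [norm_pos_iff.mpr hpI]
    calc ‖zm / (Complex.I - zm) + Complex.I / (zp - Complex.I)‖
        ≤ ‖zm / (Complex.I - zm)‖ + ‖Complex.I / (zp - Complex.I)‖ :=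
          norm_add_le _ _
      _ ≤ κ / (1 - κ) + κ / (1 - κ) := add_le_add b1 b2
      _ = 2 * κ / (1 - κ) := by ring
  -- part 5
  have p5 : ‖(deriv m Complex.I)⁻¹ - 1‖ ≤ 2 * κ / (1 - κ) := by
    have hab : zm * zp⁻¹ - 1 ≠ 0 := by
      intro h
      have h2 : ‖zm * zp⁻¹‖ < 1 := by
        rw [norm_mul]
        nlinarith [norm_nonneg zm, norm_nonneg (zp⁻¹)]
      have h3 : zm * zp⁻¹ = 1 := by linear_combination h
      rw [h3] at h2; simp at h2
    have hsplit : (deriv m Complex.I)⁻¹ - 1 =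
        (zm - zp⁻¹ - 2 * Complex.I * (zm * zp⁻¹)) / (Complex.I * (zm * zp⁻¹ - 1)) := by
      have hIp2 : -Complex.I + zp ≠ 0 := fun h => hIp (by linear_combination -h)
      have hIm2 : -Complex.I + zm ≠ 0 := fun h => hIm (by linear_combination -h)
      rw [hDval]
      field_simp
      linear_combination Complex.I_sq
    rw [hsplit, norm_div]
    have hnum : ‖zm - zp⁻¹ - 2 * Complex.I * (zm * zp⁻¹)‖ ≤ 2 * κ * (1 + κ) := by
      calc ‖zm - zp⁻¹ - 2 * Complex.I * (zm * zp⁻¹)‖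
          ≤ ‖zm - zp⁻¹‖ + ‖2 * Complex.I * (zm * zp⁻¹)‖ := norm_sub_le _ _
        _ ≤ (‖zm‖ + ‖zp⁻¹‖) + 2 * (‖zm‖ * ‖zp⁻¹‖) := by
            refine add_le_add (norm_sub_le _ _) ?_
            simp [norm_mul]
        _ ≤ (κ + κ) + 2 * (κ * κ) := by
            refine add_le_add (add_le_add hzm hb) ?_
            have h0m := norm_nonneg zm
            have h0b := norm_nonneg (zp⁻¹)
            nlinarith
        _ = 2 * κ * (1 + κ) := by ring
    have hden : (1:ℝ) - κ * κ ≤ ‖Complex.I * (zm * zp⁻¹ - 1)‖ := by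
      rw [norm_mul, Complex.norm_I, one_mul, norm_sub_rev]
      have := norm_sub_norm_le (1:ℂ) (zm * zp⁻¹)
      simp only [norm_one, norm_mul] at this
      have h0m := norm_nonneg zm
      have h0b := norm_nonneg (zp⁻¹)
      nlinarith
    have hdenpos : (0:ℝ) < 1 - κ * κ := by nlinarith
    calc ‖zm - zp⁻¹ - 2 * Complex.I * (zm * zp⁻¹)‖ / ‖Complex.I * (zm * zp⁻¹ - 1)‖
        ≤ (2 * κ * (1 + κ)) / (1 - κ * κ) := by
          exact div_le_div₀ (by positivity) hnum hdenpos hden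
      _ = 2 * κ / (1 - κ) := by
          rw [div_eq_div_iff hdenpos.ne' h1κ.ne']
          ring
  exact ⟨p1, p2, p3, p4, p5⟩
end
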